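/- C-orbit convolution theorem (abstract form): Let W ≤ O(n) be finite, F_M ⊂ ℝⁿ finite, ε : F_M → ℝ_{>0}, Λ_M finite, and suppose the discrete orthogonality Σ_{x∈F_M} ε(x) Φ_λ(x) conj(Φ_μ(x)) = N_λ δ_{λμ} holds (N_λ > 0), where Φ_λ(x) = Σ_{w∈W} exp(2πi⟨w(λ),x⟩). Define for f, g : F_M → ℂ extended by interpolation g(y) := Σ_{λ∈Λ_M} G_λ Φ_λ(y) (G_λ the transform coefficients of g), the convolution (f∗g)(u) = Σ_{x∈F_M} ε(x) Σ_{w∈W} f(x) g(u − w(x)). Then (f∗g)(u) = Σ_{λ∈Λ_M} N_λ F_λ G_λ Φ_λ(u), where F_λ, G_λ are the orbit transform coefficients F_λ = (1/N_λ) Σ_{x∈F_M} ε(x) f(x) conj(Φ_λ(x)) and similarly for G_λ. -/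

import Mathlib

open scoped BigOperators

noncomputable def CorbitFn {n : ℕ}
    (W : Subgroup (EuclideanSpace ℝ (Fin n) ≃ₗᵢ[ℝ] EuclideanSpace ℝ (Fin n)))
    [Fintype W] (lam x : EuclideanSpace ℝ (Fin n)) : ℂ :=
  ∑ w : W, Complex.exp (2 * Real.pi * Complex.I *
    ((inner ℝ ((w : EuclideanSpace ℝ (Fin n) ≃ₗᵢ[ℝ] EuclideanSpace ℝ (Fin n)) lam) x : ℝ) : ℂ))

lemma Corbit_key {n : ℕ}
    (W : Subgroup (EuclideanSpace ℝ (Fin n) ≃ₗᵢ[ℝ] EuclideanSpace ℝ (Fin n)))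
    [Fintype W] (lam u x : EuclideanSpace ℝ (Fin n)) :
    ∑ w : W, CorbitFn W lam (u - (w : EuclideanSpace ℝ (Fin n) ≃ₗᵢ[ℝ] EuclideanSpace ℝ (Fin n)) x)
      = CorbitFn W lam u * (starRingEnd ℂ) (CorbitFn W lam x) := by
  classical
  set A : W → ℂ := fun a => Complex.exp (2 * Real.pi * Complex.I *
    ((inner ℝ ((a : EuclideanSpace ℝ (Fin n) ≃ₗᵢ[ℝ] EuclideanSpace ℝ (Fin n)) lam) u : ℝ) : ℂ)) with hA
  set B : W → ℂ := fun b => (starRingEnd ℂ) (Complex.exp (2 * Real.pi * Complex.I *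
    ((inner ℝ ((b : EuclideanSpace ℝ (Fin n) ≃ₗᵢ[ℝ] EuclideanSpace ℝ (Fin n)) lam) x : ℝ) : ℂ))) with hB
  have hterm : ∀ w w' : W,
      Complex.exp (2 * Real.pi * Complex.I *
        ((inner ℝ ((w' : EuclideanSpace ℝ (Fin n) ≃ₗᵢ[ℝ] EuclideanSpace ℝ (Fin n)) lam)
          (u - (w : EuclideanSpace ℝ (Fin n) ≃ₗᵢ[ℝ] EuclideanSpace ℝ (Fin n)) x) : ℝ) : ℂ))
        = A w' * B (w⁻¹ * w') := by
    intro w w'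
    have hinner : (inner ℝ ((w' : EuclideanSpace ℝ (Fin n) ≃ₗᵢ[ℝ] EuclideanSpace ℝ (Fin n)) lam)
        ((w : EuclideanSpace ℝ (Fin n) ≃ₗᵢ[ℝ] EuclideanSpace ℝ (Fin n)) x) : ℝ) =
        inner ℝ (((w⁻¹ * w' : W) : EuclideanSpace ℝ (Fin n) ≃ₗᵢ[ℝ] EuclideanSpace ℝ (Fin n)) lam) x := by
      have h : ((w : EuclideanSpace ℝ (Fin n) ≃ₗᵢ[ℝ] EuclideanSpace ℝ (Fin n))
          (((w⁻¹ * w' : W) : EuclideanSpace ℝ (Fin n) ≃ₗᵢ[ℝ] EuclideanSpace ℝ (Fin n)) lam)) =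
          (w' : EuclideanSpace ℝ (Fin n) ≃ₗᵢ[ℝ] EuclideanSpace ℝ (Fin n)) lam := by
        simp
      rw [← h, LinearIsometryEquiv.inner_map_map]
    rw [inner_sub_right, hinner, hA, hB]
    simp only []
    rw [← Complex.exp_conj, ← Complex.exp_add]
    congr 1
    simp only [map_mul, Complex.conj_I, Complex.conj_ofReal, map_ofNat]
    push_cast
    ring
  unfold CorbitFn
  rw [map_sum, Finset.sum_mul_sum]
  calc (∑ w : W, ∑ w' : W, Complex.exp (2 * Real.pi * Complex.I *
        ((inner ℝ ((w' : EuclideanSpace ℝ (Fin n) ≃ₗᵢ[ℝ] EuclideanSpace ℝ (Fin n)) lam)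
          (u - (w : EuclideanSpace ℝ (Fin n) ≃ₗᵢ[ℝ] EuclideanSpace ℝ (Fin n)) x) : ℝ) : ℂ)))
      = ∑ w : W, ∑ v : W, A (w * v) * B v := by
        refine Finset.sum_congr rfl fun w _ => ?_
        refine (Fintype.sum_equiv (Equiv.mulLeft w) _ _ ?_).symm
        intro v
        simp only [Equiv.coe_mulLeft]
        rw [hterm w (w * v)]
        simp [mul_assoc]
    _ = ∑ v : W, ∑ w : W, A (w * v) * B v := Finset.sum_comm
    _ = ∑ v : W, (∑ a : W, A a) * B v := by
        refine Finset.sum_congr rfl fun v _ => ?_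
        rw [← Finset.sum_mul]
        congr 1
        exact Fintype.sum_equiv (Equiv.mulRight v) _ _ (fun w => by simp)
    _ = ∑ a : W, ∑ b : W, A a * B b := by
        rw [← Finset.mul_sum, Finset.sum_mul_sum]

open Classical in
/-- The `C`-orbit convolution theorem (abstract form). -/
theorem C_orbit_convolution_theorem {n : ℕ}
    (W : Subgroup (EuclideanSpace ℝ (Fin n) ≃ₗᵢ[ℝ] EuclideanSpace ℝ (Fin n)))
    [Fintype W]
    (FM : Finset (EuclideanSpace ℝ (Fin n)))
    (Λ : Finset (EuclideanSpace ℝ (Fin n)))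
    (ε : EuclideanSpace ℝ (Fin n) → ℝ) (hε : ∀ x ∈ FM, 0 < ε x)
    (N : EuclideanSpace ℝ (Fin n) → ℝ) (hN : ∀ lam ∈ Λ, 0 < N lam)
    (horth : ∀ lam ∈ Λ, ∀ mu ∈ Λ,
      ∑ x ∈ FM, (ε x : ℂ) * CorbitFn W lam x * (starRingEnd ℂ) (CorbitFn W mu x) =
        if lam = mu then (N lam : ℂ) else 0)
    (f g : EuclideanSpace ℝ (Fin n) → ℂ)
    -- orbit transform coefficients of `f` and `g`
    (F G : EuclideanSpace ℝ (Fin n) → ℂ)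
    (hF : ∀ lam ∈ Λ,
      F lam = (1 / (N lam : ℂ)) * ∑ x ∈ FM, (ε x : ℂ) * f x * (starRingEnd ℂ) (CorbitFn W lam x))
    (hG : ∀ lam ∈ Λ,
      G lam = (1 / (N lam : ℂ)) * ∑ x ∈ FM, (ε x : ℂ) * g x * (starRingEnd ℂ) (CorbitFn W lam x))
    -- the interpolation of `g` by `C`-orbit functions
    (gI : EuclideanSpace ℝ (Fin n) → ℂ)
    (hgI : ∀ y, gI y = ∑ lam ∈ Λ, G lam * CorbitFn W lam y)
    (u : EuclideanSpace ℝ (Fin n)) :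
    (∑ x ∈ FM, (ε x : ℂ) * ∑ w : W,
        f x * gI (u - (w : EuclideanSpace ℝ (Fin n) ≃ₗᵢ[ℝ] EuclideanSpace ℝ (Fin n)) x)) =
      ∑ lam ∈ Λ, (N lam : ℂ) * F lam * G lam * CorbitFn W lam u := by
  calc (∑ x ∈ FM, (ε x : ℂ) * ∑ w : W,
        f x * gI (u - (w : EuclideanSpace ℝ (Fin n) ≃ₗᵢ[ℝ] EuclideanSpace ℝ (Fin n)) x))
      = ∑ x ∈ FM, ∑ lam ∈ Λ, (ε x : ℂ) * f x *
          (G lam * (CorbitFn W lam u * (starRingEnd ℂ) (CorbitFn W lam x))) := by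
        refine Finset.sum_congr rfl fun x _ => ?_
        have hsum : (∑ w : W,
            f x * gI (u - (w : EuclideanSpace ℝ (Fin n) ≃ₗᵢ[ℝ] EuclideanSpace ℝ (Fin n)) x))
            = f x * ∑ lam ∈ Λ, G lam *
              (CorbitFn W lam u * (starRingEnd ℂ) (CorbitFn W lam x)) := by
          rw [← Finset.mul_sum]
          congr 1
          calc (∑ w : W, gI (u - (w : EuclideanSpace ℝ (Fin n) ≃ₗᵢ[ℝ] EuclideanSpace ℝ (Fin n)) x))
              = ∑ w : W, ∑ lam ∈ Λ, G lam *
                  CorbitFn W lam (u - (w : EuclideanSpace ℝ (Fin n) ≃ₗᵢ[ℝ] EuclideanSpace ℝ (Fin n)) x) :=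
                Finset.sum_congr rfl fun w _ => hgI _
            _ = ∑ lam ∈ Λ, ∑ w : W, G lam *
                  CorbitFn W lam (u - (w : EuclideanSpace ℝ (Fin n) ≃ₗᵢ[ℝ] EuclideanSpace ℝ (Fin n)) x) :=
                Finset.sum_comm
            _ = ∑ lam ∈ Λ, G lam * (CorbitFn W lam u * (starRingEnd ℂ) (CorbitFn W lam x)) := by
                refine Finset.sum_congr rfl fun lam _ => ?_
                rw [← Finset.mul_sum, Corbit_key]
        rw [hsum, Finset.mul_sum, Finset.mul_sum]
        exact Finset.sum_congr rfl fun lam _ => by ring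
    _ = ∑ lam ∈ Λ, ∑ x ∈ FM, (ε x : ℂ) * f x *
          (G lam * (CorbitFn W lam u * (starRingEnd ℂ) (CorbitFn W lam x))) := Finset.sum_comm
    _ = ∑ lam ∈ Λ, (N lam : ℂ) * F lam * G lam * CorbitFn W lam u := by
        refine Finset.sum_congr rfl fun lam hlam => ?_
        have hNne : ((N lam : ℝ) : ℂ) ≠ 0 := by
          exact_mod_cast (hN lam hlam).ne'
        have hS : (∑ x ∈ FM, (ε x : ℂ) * f x * (starRingEnd ℂ) (CorbitFn W lam x))
            = (N lam : ℂ) * F lam := by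
          rw [hF lam hlam]
          field_simp
        calc (∑ x ∈ FM, (ε x : ℂ) * f x *
              (G lam * (CorbitFn W lam u * (starRingEnd ℂ) (CorbitFn W lam x))))
            = G lam * CorbitFn W lam u *
              ∑ x ∈ FM, (ε x : ℂ) * f x * (starRingEnd ℂ) (CorbitFn W lam x) := by
              rw [Finset.mul_sum]
              exact Finset.sum_congr rfl fun x _ => by ring
          _ = (N lam : ℂ) * F lam * G lam * CorbitFn W lam u := by rw [hS]; ring
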